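/- Let $n$ be a normalizer of $D(E)$ in $A_R(G_E)$ over an integral domain $R$. Then $\alpha_n$ is a homeomorphism from $\operatorname{dom}(n) = \operatorname{supp}(n^*n)$ onto $\operatorname{ran}(n) = \operatorname{supp}(nn^*) = \operatorname{dom}(n^*)$, with inverse $\alpha_{n^*}$. -/
import Mathlib


open scoped Classical BigOperators

namespace LPA

structure DirGraph where
  V : Type
  E : Type
  r : E → V
  s : E → V

structure InfPath (G : DirGraph) where
  edges : ℕ → G.E
  compat : ∀ i, G.s (edges i) = G.r (edges (i + 1))

structure FinPath (G : DirGraph) where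
  len : ℕ
  vtx : G.V
  edges : ℕ → G.E
  compat : ∀ i, i + 1 < len → G.s (edges i) = G.r (edges (i + 1))
  vtx_eq : 0 < len → vtx = G.r (edges 0)

variable {G : DirGraph}

/-- The source vertex of a finite path (its `vtx` if it has length `0`). -/
def FinPath.src (μ : FinPath G) : G.V :=
  if μ.len = 0 then μ.vtx else G.s (μ.edges (μ.len - 1))

/-- The range vertex of an infinite path. -/
def InfPath.rng (x : InfPath G) : G.V := G.r (x.edges 0)

/-- `x ∼ₖ y`: shift equivalence with lag `k`. -/
def ShiftEquiv (x : InfPath G) (k : ℤ) (y : InfPath G) : Prop :=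
  ∃ a b N : ℕ, (a : ℤ) - (b : ℤ) = k ∧ ∀ i, N ≤ i → x.edges (i + a) = y.edges (i + b)

def RowFinite (G : DirGraph) : Prop := ∀ v : G.V, {e : G.E | G.r e = v}.Finite

def NoSources (G : DirGraph) : Prop := ∀ v : G.V, ∃ e : G.E, G.r e = v

/-- `x = μ z`: the infinite path `x` is the concatenation of the finite path `μ`
with the infinite path `z`. -/
def IsConcat (μ : FinPath G) (z x : InfPath G) : Prop :=
  z.rng = μ.src ∧ ∀ i, x.edges i = if i < μ.len then μ.edges i else z.edges (i - μ.len)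

/-- `ρ = μ β`: concatenation of finite paths. -/
def IsAppendF (μ β ρ : FinPath G) : Prop :=
  ρ.len = μ.len + β.len ∧ (∀ i < μ.len, ρ.edges i = μ.edges i) ∧
    (∀ i < β.len, ρ.edges (μ.len + i) = β.edges i) ∧
    ρ.vtx = if μ.len = 0 then β.vtx else μ.vtx

/-- Triples `(x, k, y)`: the ambient type of the graph groupoid. -/
abbrev GTrip (G : DirGraph) := InfPath G × ℤ × InfPath G

def gmul (g h : GTrip G) : GTrip G := (g.1, g.2.1 + h.2.1, h.2.2)
def ginv (g : GTrip G) : GTrip G := (g.2.2, -g.2.1, g.1)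
def unit (x : InfPath G) : GTrip G := (x, 0, x)

def GraphGroupoid (G : DirGraph) : Set (GTrip G) :=
  {g | ShiftEquiv g.1 g.2.1 g.2.2}

/-- `BC` for subsets of the groupoid. -/
def setMul (B C : Set (GTrip G)) : Set (GTrip G) :=
  {g | ∃ γ ∈ B, ∃ η ∈ C, γ.2.2 = η.1 ∧ g = gmul γ η}

def setInv (B : Set (GTrip G)) : Set (GTrip G) := ginv '' B

/-- The cylinder set `Z(μ)` of infinite paths extending `μ`. -/
def Zset (μ : FinPath G) : Set (InfPath G) :=
  {x | (∀ i < μ.len, x.edges i = μ.edges i) ∧ x.rng = μ.vtx}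

/-- The basic compact open bisection `Z(μ,ν) = {(μz, |μ|-|ν|, νz)}`. -/
def ZZ (μ ν : FinPath G) : Set (GTrip G) :=
  {g | ∃ z : InfPath G, IsConcat μ z g.1 ∧ IsConcat ν z g.2.2 ∧
    g.2.1 = (μ.len : ℤ) - (ν.len : ℤ)}

instance : TopologicalSpace (InfPath G) :=
  TopologicalSpace.generateFrom {S | ∃ μ : FinPath G, S = Zset μ}

def unitSet (S : Set (InfPath G)) : Set (GTrip G) := {g | ∃ x ∈ S, g = unit x}

variable (R : Type) [CommRing R]

/-- The diagonal `D(E)` of the Steinberg algebra. -/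
noncomputable def Diag (G : DirGraph) : Submodule R (GTrip G → R) :=
  Submodule.span R {f | ∃ μ : FinPath G, f = Set.indicator (unitSet (Zset μ)) 1}

/-- The Steinberg algebra `A_R(G_E)` as a set of functions on the groupoid. -/
noncomputable def Steinberg (G : DirGraph) : Submodule R (GTrip G → R) :=
  Submodule.span R
    {f | ∃ μ ν : FinPath G, μ.src = ν.src ∧ f = Set.indicator (ZZ μ ν) 1}

variable {R}

/-- Convolution product. -/
noncomputable def conv (f g : GTrip G → R) : GTrip G → R :=
  fun γ => ∑ᶠ η ∈ {η : GTrip G | η.1 = γ.1}, f η * g (gmul (ginv η) γ)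

/-- Involution `f^*(γ) = star (f (γ⁻¹))`. -/
def starf [StarRing R] (f : GTrip G → R) : GTrip G → R :=
  fun γ => star (f (ginv γ))

/-- `n` is a normalizer of the diagonal. -/
def IsNormalizer [StarRing R] (n : GTrip G → R) : Prop :=
  n ∈ Steinberg R G ∧ ∀ d ∈ Diag R G,
    conv (conv n d) (starf n) ∈ Diag R G ∧ conv (conv (starf n) d) n ∈ Diag R G

/-- `α_n(x) = r(supp(n) x)` (given by a choice; unique for normalizers). -/
noncomputable def alphaFun (n : GTrip G → R) (x : InfPath G) : InfPath G :=
  if h : ∃ g : GTrip G, n g ≠ 0 ∧ g.2.2 = x then h.choose.1 else x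

/-- `dom(n) = supp(n^* n)`, as a subset of the infinite path space. -/
noncomputable def domSet [StarRing R] (n : GTrip G → R) : Set (InfPath G) :=
  {x | conv (starf n) n (unit x) ≠ 0}

/-- `ran(n) = supp(n n^*)`, as a subset of the infinite path space. -/
noncomputable def ranSet [StarRing R] (n : GTrip G → R) : Set (InfPath G) :=
  {x | conv n (starf n) (unit x) ≠ 0}

/-- `d ∘ α_n`, viewed as a function on the groupoid vanishing off `s(supp n)`. -/
noncomputable def dAlpha (d n : GTrip G → R) : GTrip G → R := fun g =>
  if (g.2.1 = 0 ∧ g.1 = g.2.2 ∧ ∃ h : GTrip G, n h ≠ 0 ∧ h.2.2 = g.2.2)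
  then d (unit (alphaFun n g.2.2)) else 0

/-- `p_x`, the characteristic function of the unit `{x}`. -/
noncomputable def ppt (R : Type) [CommRing R] (x : InfPath G) : GTrip G → R :=
  Set.indicator {unit x} 1

/-- `f` is homogeneous of degree `k`. -/
def Homog (k : ℤ) (f : GTrip G → R) : Prop := ∀ g : GTrip G, f g ≠ 0 → g.2.1 = k

def IsCycle (η : FinPath G) : Prop :=
  0 < η.len ∧ η.src = η.vtx ∧
    ∀ i j, 0 < i → i + 1 < η.len → 0 < j → j + 1 < η.len → i ≠ j →
      G.s (η.edges i) ≠ G.r (η.edges j)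

def HasEntrance (η : FinPath G) : Prop :=
  ∃ (e : G.E) (i : ℕ), i < η.len ∧ G.r e = G.r (η.edges i) ∧ e ≠ η.edges i

/-- `z = η η η ⋯`. -/
def IsPeriodicOf (η : FinPath G) (z : InfPath G) : Prop :=
  ∀ i, z.edges i = η.edges (i % η.len)

end LPA

namespace LPA

variable {G : DirGraph}

lemma InfPath.eext {x y : InfPath G} (h : x.edges = y.edges) : x = y := by
  cases x; cases y; simp_all

lemma GTrip.eext {g h : GTrip G} (h1 : g.1 = h.1) (h2 : g.2.1 = h.2.1)
    (h3 : g.2.2 = h.2.2) : g = h := by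
  obtain ⟨a, b, c⟩ := g; obtain ⟨a', b', c'⟩ := h; simp_all

def shiftP (x : InfPath G) (m : ℕ) : InfPath G :=
  ⟨fun i => x.edges (i + m), fun i => by
    have := x.compat (i + m)
    simpa [Nat.add_right_comm] using this⟩

@[simp] lemma shiftP_edges (x : InfPath G) (m i : ℕ) :
    (shiftP x m).edges i = x.edges (i + m) := rfl

def catE (μ : FinPath G) (z : InfPath G) : ℕ → G.E :=
  fun i => if i < μ.len then μ.edges i else z.edges (i - μ.len)

lemma catE_compat {μ : FinPath G} {z : InfPath G} (h : z.rng = μ.src) (i : ℕ) :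
    G.s (catE μ z i) = G.r (catE μ z (i + 1)) := by
  unfold catE
  rcases lt_trichotomy (i+1) μ.len with h1 | h1 | h1
  · rw [if_pos (by omega), if_pos h1]; exact μ.compat i h1
  · rw [if_pos (by omega), if_neg (by omega)]
    have h2 : μ.src = G.s (μ.edges (μ.len - 1)) := by
      unfold FinPath.src; rw [if_neg (by omega)]
    rw [show i = μ.len - 1 by omega]
    rw [show μ.len - 1 + 1 - μ.len = 0 by omega]
    rw [← h2, ← h]; rfl
  · rw [if_neg (by omega), if_neg (by omega)]
    have h2 := z.compat (i - μ.len)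
    rw [show i + 1 - μ.len = i - μ.len + 1 by omega]
    exact h2

noncomputable def concatF (μ : FinPath G) (z : InfPath G) : InfPath G :=
  if h : z.rng = μ.src then ⟨catE μ z, catE_compat h⟩ else z

lemma concatF_edges {μ : FinPath G} {z : InfPath G} (h : z.rng = μ.src) :
    (concatF μ z).edges = catE μ z := by
  unfold concatF; rw [dif_pos h]

lemma isConcat_iff {μ : FinPath G} {z x : InfPath G} :
    IsConcat μ z x ↔ z.rng = μ.src ∧ x = concatF μ z := by
  constructor
  · rintro ⟨h1, h2⟩
    refine ⟨h1, InfPath.eext ?_⟩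
    rw [concatF_edges h1]; funext i; exact h2 i
  · rintro ⟨h1, rfl⟩
    exact ⟨h1, fun i => by rw [concatF_edges h1]; rfl⟩

def pfx (x : InfPath G) (M : ℕ) : FinPath G :=
  ⟨M, x.rng, x.edges, fun i _ => x.compat i, fun _ => rfl⟩

lemma mem_Zset_pfx {x x' : InfPath G} {M : ℕ} :
    x' ∈ Zset (pfx x M) ↔ (∀ i < M, x'.edges i = x.edges i) ∧ x'.rng = x.rng :=
  Iff.rfl

lemma self_mem_Zset_pfx (x : InfPath G) (M : ℕ) : x ∈ Zset (pfx x M) :=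
  ⟨fun _ _ => rfl, rfl⟩

def Act (μ ν : FinPath G) (x : InfPath G) : Prop :=
  IsConcat ν (shiftP x ν.len) x ∧ (shiftP x ν.len).rng = μ.src

noncomputable def Ga (μ ν : FinPath G) (x : InfPath G) : GTrip G :=
  (concatF μ (shiftP x ν.len), (μ.len : ℤ) - (ν.len : ℤ), x)

@[simp] lemma Ga_deg (μ ν : FinPath G) (x : InfPath G) :
    (Ga μ ν x).2.1 = (μ.len : ℤ) - (ν.len : ℤ) := rfl

@[simp] lemma Ga_src (μ ν : FinPath G) (x : InfPath G) : (Ga μ ν x).2.2 = x := rfl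

lemma mem_ZZ_iff {μ ν : FinPath G} {γ : GTrip G} :
    γ ∈ ZZ μ ν ↔ Act μ ν γ.2.2 ∧ γ = Ga μ ν γ.2.2 := by
  constructor
  · rintro ⟨z, hμ, hν, hk⟩
    have hz : z = shiftP γ.2.2 ν.len := by
      apply InfPath.eext; funext i
      have h2 := hν.2 (i + ν.len)
      rw [if_neg (by omega)] at h2
      simpa using h2.symm
    subst hz
    have hν' := hν
    rw [isConcat_iff] at hμ hν
    exact ⟨⟨hν', hμ.1⟩, GTrip.eext hμ.2 hk rfl⟩
  · rintro ⟨⟨h1, h2⟩, h3⟩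
    refine ⟨shiftP γ.2.2 ν.len, ?_, h1, ?_⟩
    · rw [isConcat_iff]
      exact ⟨h2, congrArg Prod.fst h3⟩
    · exact congrArg (fun t => t.2.1) h3

@[simp] lemma ginv_ginv (γ : GTrip G) : ginv (ginv γ) = γ := by
  simp [ginv]

lemma ginv_mem_ZZ {μ ν : FinPath G} {γ : GTrip G} : ginv γ ∈ ZZ μ ν ↔ γ ∈ ZZ ν μ := by
  show (∃ z, IsConcat μ z γ.2.2 ∧ IsConcat ν z γ.1 ∧ -γ.2.1 = (μ.len : ℤ) - ν.len) ↔ _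
  constructor
  · rintro ⟨z, h1, h2, h3⟩; exact ⟨z, h2, h1, by omega⟩
  · rintro ⟨z, h1, h2, h3⟩; exact ⟨z, h2, h1, by omega⟩

lemma Act_iff {μ ν : FinPath G} {x : InfPath G} :
    Act μ ν x ↔ (∀ i < ν.len, x.edges i = ν.edges i) ∧
      G.r (x.edges ν.len) = ν.src ∧ G.r (x.edges ν.len) = μ.src := by
  unfold Act IsConcat
  have hr : (shiftP x ν.len).rng = G.r (x.edges ν.len) := by
    show G.r ((shiftP x ν.len).edges 0) = _
    rw [shiftP_edges]; norm_num
  constructor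
  · rintro ⟨⟨h1, h2⟩, h3⟩
    refine ⟨fun i hi => by rw [h2 i, if_pos hi], ?_, ?_⟩
    · rw [← hr]; exact h1
    · rw [← hr]; exact h3
  · rintro ⟨h1, h2, h3⟩
    refine ⟨⟨by rw [hr]; exact h2, fun i => ?_⟩, by rw [hr]; exact h3⟩
    by_cases hi : i < ν.len
    · rw [if_pos hi]; exact h1 i hi
    · rw [if_neg hi, shiftP_edges]; congr 1; omega

lemma Ga_fst_edges {μ ν : FinPath G} {x : InfPath G} (h : Act μ ν x) (p : ℕ) :
    (Ga μ ν x).1.edges p = if p < μ.len then μ.edges p else x.edges (p - μ.len + ν.len) := by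
  show (concatF μ (shiftP x ν.len)).edges p = _
  rw [concatF_edges h.2]
  unfold catE
  by_cases hp : p < μ.len
  · rw [if_pos hp, if_pos hp]
  · rw [if_neg hp, if_neg hp, shiftP_edges]

end LPA

namespace LPA

variable {G : DirGraph}

lemma Act_cyl {x x' : InfPath G} {N : ℕ} (hcyl : ∀ t < N, x'.edges t = x.edges t)
    {μ ν : FinPath G} (hν : ν.len < N) : Act μ ν x' ↔ Act μ ν x := by
  rw [Act_iff, Act_iff]
  constructor <;> rintro ⟨h1, h2, h3⟩
  · refine ⟨fun i hi => ((hcyl i (by omega)).symm).trans (h1 i hi), ?_, ?_⟩ <;>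
      rw [← hcyl ν.len hν] <;> assumption
  · refine ⟨fun i hi => (hcyl i (by omega)).trans (h1 i hi), ?_, ?_⟩ <;>
      rw [hcyl ν.len hν] <;> assumption

lemma Ga_fst_eq_transfer {x x' : InfPath G} {N : ℕ}
    (hcyl : ∀ t < N, x'.edges t = x.edges t)
    {μ₁ ν₁ μ₂ ν₂ : FinPath G}
    (hb₁ : μ₁.len + ν₂.len ≤ N) (hb₂ : μ₂.len + ν₁.len ≤ N)
    (hA₁ : Act μ₁ ν₁ x) (hA₂ : Act μ₂ ν₂ x)
    (hA₁' : Act μ₁ ν₁ x') (hA₂' : Act μ₂ ν₂ x')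
    (hk : μ₁.len + ν₂.len = μ₂.len + ν₁.len)
    (h : (Ga μ₁ ν₁ x).1 = (Ga μ₂ ν₂ x).1) : (Ga μ₁ ν₁ x').1 = (Ga μ₂ ν₂ x').1 := by
  apply InfPath.eext; funext t
  have h1 := congrFun (congrArg InfPath.edges h) t
  rw [Ga_fst_edges hA₁ t, Ga_fst_edges hA₂ t] at h1
  rw [Ga_fst_edges hA₁' t, Ga_fst_edges hA₂' t]
  by_cases c1 : t < μ₁.len <;> by_cases c2 : t < μ₂.len
  · rw [if_pos c1, if_pos c2] at h1 ⊢; exact h1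
  · rw [if_pos c1, if_neg c2] at h1 ⊢
    rw [hcyl (t - μ₂.len + ν₂.len) (by omega)]; exact h1
  · rw [if_neg c1, if_pos c2] at h1 ⊢
    rw [hcyl (t - μ₁.len + ν₁.len) (by omega)]; exact h1
  · rw [if_neg c1, if_neg c2]
    congr 1; omega

lemma source_eq {x x'' : InfPath G} {N : ℕ}
    (hcyl : ∀ t < N, x''.edges t = x.edges t)
    {μ₁ ν₁ μ₂ ν₂ : FinPath G}
    (hν₁ : ν₁.len < N) (hν₂ : ν₂.len < N)
    (hA₁ : Act μ₁ ν₁ x'') (hA₂ : Act μ₂ ν₂ x)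
    (hk : μ₁.len + ν₂.len = μ₂.len + ν₁.len)
    (h : (Ga μ₁ ν₁ x'').1 = (Ga μ₂ ν₂ x).1) : x'' = x := by
  apply InfPath.eext; funext t
  by_cases ht : t < N
  · exact hcyl t ht
  · have hp := congrFun (congrArg InfPath.edges h) (t - ν₁.len + μ₁.len)
    rw [Ga_fst_edges hA₁, Ga_fst_edges hA₂] at hp
    rw [if_neg (by omega), if_neg (by omega)] at hp
    rw [show t - ν₁.len + μ₁.len - μ₁.len + ν₁.len = t by omega] at hp
    rw [show t - ν₁.len + μ₁.len - μ₂.len + ν₂.len = t by omega] at hp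
    exact hp

lemma finsum_mem_single {α : Type} {M : Type} [AddCommMonoid M] {S : Set α} (f : α → M)
    {a : α} (ha : a ∈ S) (h0 : ∀ b ∈ S, b ≠ a → f b = 0) : (∑ᶠ i ∈ S, f i) = f a := by
  rw [finsum_mem_def, finsum_eq_single _ a]
  · exact Set.indicator_of_mem ha f
  · intro b hb
    by_cases hbS : b ∈ S
    · rw [Set.indicator_of_mem hbS]; exact h0 b hbS hb
    · exact Set.indicator_of_notMem hbS f

section Ring
variable {R : Type} [CommRing R]

lemma conv_apply (f g : GTrip G → R) (γ : GTrip G) :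
    conv f g γ = ∑ᶠ η ∈ {η : GTrip G | η.1 = γ.1}, f η * g (gmul (ginv η) γ) := rfl

lemma conv_d_apply (n : GTrip G → R) (ζ : FinPath G) (η : GTrip G) :
    conv n (Set.indicator (unitSet (Zset ζ)) 1) η
      = n η * (if η.2.2 ∈ Zset ζ then 1 else 0) := by
  rw [conv_apply]
  rw [finsum_mem_single _ (show η ∈ {η' : GTrip G | η'.1 = η.1} from rfl)]
  · congr 1
    have h1 : gmul (ginv η) η = unit η.2.2 := by
      simp [gmul, ginv, unit]
    rw [h1]
    by_cases hz : η.2.2 ∈ Zset ζ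
    · rw [if_pos hz,
        Set.indicator_of_mem (show unit η.2.2 ∈ unitSet (Zset ζ) from ⟨η.2.2, hz, rfl⟩)]
      rfl
    · rw [if_neg hz, Set.indicator_of_notMem]
      rintro ⟨w, hw, hwe⟩
      have e : η.2.2 = w := congrArg Prod.fst hwe
      exact hz (by rw [e]; exact hw)
  · intro b hb hne
    have hd : Set.indicator (unitSet (Zset ζ)) (1 : GTrip G → R) (gmul (ginv b) η) = 0 := by
      apply Set.indicator_of_notMem
      rintro ⟨w, hw, hwe⟩
      apply hne
      have e1 : b.2.2 = w := congrArg Prod.fst hwe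
      have e2 : -b.2.1 + η.2.1 = 0 := congrArg (fun t => t.2.1) hwe
      have e3 : η.2.2 = w := congrArg (fun t => t.2.2) hwe
      exact GTrip.eext hb (by omega) (e1.trans e3.symm)
    rw [hd, mul_zero]

lemma rep_of_mem {n : GTrip G → R} (h : n ∈ Steinberg R G) :
    ∃ (m : ℕ) (c : Fin m → R) (p q : Fin m → FinPath G),
      (∀ i, (p i).src = (q i).src) ∧
      ∀ γ, n γ = ∑ i, c i * (if γ ∈ ZZ (p i) (q i) then 1 else 0) := by
  rw [Steinberg, Submodule.mem_span_set'] at h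
  obtain ⟨m, c, gf, hsum⟩ := h
  choose p q hsrc hf using fun i => (gf i).2
  refine ⟨m, c, p, q, hsrc, fun γ => ?_⟩
  rw [← congrFun hsum γ, Finset.sum_apply]
  refine Finset.sum_congr rfl fun i _ => ?_
  rw [Pi.smul_apply, smul_eq_mul, hf i]
  simp [Set.indicator_apply]

lemma nonzero_rep {n : GTrip G → R} {m : ℕ} {c : Fin m → R} {p q : Fin m → FinPath G}
    (hrep : ∀ γ, n γ = ∑ i, c i * (if γ ∈ ZZ (p i) (q i) then 1 else 0))
    {γ : GTrip G} (hγ : n γ ≠ 0) :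
    ∃ i : Fin m, Act (p i) (q i) γ.2.2 ∧ γ = Ga (p i) (q i) γ.2.2 := by
  have h1 : ∃ i : Fin m, γ ∈ ZZ (p i) (q i) := by
    by_contra hno; push_neg at hno
    exact hγ (by rw [hrep]; exact Finset.sum_eq_zero fun i _ => by rw [if_neg (hno i), mul_zero])
  obtain ⟨i, hi⟩ := h1
  rw [mem_ZZ_iff] at hi
  exact ⟨i, hi⟩

lemma value_const {n : GTrip G → R} {m : ℕ} {c : Fin m → R} {p q : Fin m → FinPath G}
    (hrep : ∀ γ, n γ = ∑ i, c i * (if γ ∈ ZZ (p i) (q i) then 1 else 0))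
    {N : ℕ} (hbnd : ∀ i j : Fin m, (q i).len + (p j).len < N)
    {x x' : InfPath G} (hcyl : ∀ t < N, x'.edges t = x.edges t)
    (i : Fin m) (hAi' : Act (p i) (q i) x') :
    n (Ga (p i) (q i) x') = n (Ga (p i) (q i) x) := by
  have hAi : Act (p i) (q i) x := (Act_cyl hcyl (by have := hbnd i i; omega)).mp hAi'
  rw [hrep, hrep]
  refine Finset.sum_congr rfl fun j _ => ?_
  have hiff : (Ga (p i) (q i) x' ∈ ZZ (p j) (q j)) ↔ (Ga (p i) (q i) x ∈ ZZ (p j) (q j)) := by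
    rw [mem_ZZ_iff, mem_ZZ_iff]
    show (Act (p j) (q j) x' ∧ Ga (p i) (q i) x' = Ga (p j) (q j) x') ↔
      (Act (p j) (q j) x ∧ Ga (p i) (q i) x = Ga (p j) (q j) x)
    rw [Act_cyl hcyl (by have := hbnd j j; omega)]
    by_cases hAj : Act (p j) (q j) x
    · simp only [hAj, true_and]
      have hAj' : Act (p j) (q j) x' := (Act_cyl hcyl (by have := hbnd j j; omega)).mpr hAj
      by_cases hk : ((p i).len : ℤ) - (q i).len = ((p j).len : ℤ) - (q j).len
      · have hkn : (p i).len + (q j).len = (p j).len + (q i).len := by omega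
        constructor
        · intro hEq
          have h1 : (Ga (p i) (q i) x').1 = (Ga (p j) (q j) x').1 := congrArg Prod.fst hEq
          have h2 := Ga_fst_eq_transfer (fun t ht => (hcyl t ht).symm)
            (le_of_lt (by have := hbnd j i; omega)) (le_of_lt (by have := hbnd i j; omega))
            hAi' hAj' hAi hAj hkn h1
          exact GTrip.eext h2 hk rfl
        · intro hEq
          have h1 : (Ga (p i) (q i) x).1 = (Ga (p j) (q j) x).1 := congrArg Prod.fst hEq
          have h2 := Ga_fst_eq_transfer hcyl
            (le_of_lt (by have := hbnd j i; omega)) (le_of_lt (by have := hbnd i j; omega))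
            hAi hAj hAi' hAj' hkn h1
          exact GTrip.eext h2 hk rfl
      · constructor <;> intro hEq <;>
          exact absurd (congrArg (fun t => t.2.1) hEq) (by simpa using hk)
    · simp [hAj]
  rw [if_congr hiff rfl rfl]

lemma diag_eq_zero {f : GTrip G → R} (hf : f ∈ Diag R G) {γ : GTrip G}
    (hγ : ∀ w : InfPath G, γ ≠ unit w) : f γ = 0 := by
  induction hf using Submodule.span_induction with
  | mem f hf =>
    obtain ⟨μ, rfl⟩ := hf
    apply Set.indicator_of_notMem
    rintro ⟨w, _, hwe⟩
    exact hγ w hwe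
  | zero => rfl
  | add f g _ _ hf hg => rw [Pi.add_apply, hf, hg, add_zero]
  | smul c f _ hf => rw [Pi.smul_apply, hf, smul_zero]

end Ring

end LPA

namespace LPA

variable {G : DirGraph}

section StarRing
variable {R : Type} [CommRing R] [StarRing R]

lemma starf_starf (n : GTrip G → R) : starf (starf n) = n := by
  funext γ
  show star (star (n (ginv (ginv γ)))) = n γ
  rw [ginv_ginv, star_star]

lemma starf_apply_ne {n : GTrip G → R} {γ : GTrip G} :
    starf n γ ≠ 0 ↔ n (ginv γ) ≠ 0 := by
  unfold starf
  rw [not_iff_not]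
  exact star_eq_zero

lemma starf_mem_steinberg {n : GTrip G → R} (h : n ∈ Steinberg R G) :
    starf n ∈ Steinberg R G := by
  obtain ⟨m, c, p, q, hsrc, hrep⟩ := rep_of_mem h
  have hst : starf n = ∑ i, star (c i) • Set.indicator (ZZ (q i) (p i)) (1 : GTrip G → R) := by
    funext γ
    rw [Finset.sum_apply]
    show star (n (ginv γ)) = _
    rw [hrep (ginv γ), star_sum]
    refine Finset.sum_congr rfl fun i _ => ?_
    rw [star_mul', Pi.smul_apply, smul_eq_mul]
    congr 1
    · rw [Set.indicator_apply, Pi.one_apply]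
      rw [show (ginv γ ∈ ZZ (p i) (q i)) = (γ ∈ ZZ (q i) (p i)) from propext ginv_mem_ZZ]
      split <;> simp
  rw [hst]
  exact Submodule.sum_mem _ fun i _ => Submodule.smul_mem _ _
    (Submodule.subset_span ⟨q i, p i, (hsrc i).symm, rfl⟩)

lemma isNormalizer_starf {n : GTrip G → R} (hn : IsNormalizer n) :
    IsNormalizer (starf n) := by
  obtain ⟨hmem, hcond⟩ := hn
  refine ⟨starf_mem_steinberg hmem, fun d hd => ?_⟩
  rw [starf_starf]
  exact ⟨(hcond d hd).2, (hcond d hd).1⟩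

lemma domSet_iff {n : GTrip G → R} [IsDomain R]
    (hbis : ∀ g h, n g ≠ 0 → n h ≠ 0 → g.2.2 = h.2.2 → g = h) (x : InfPath G) :
    x ∈ domSet n ↔ ∃ g, n g ≠ 0 ∧ g.2.2 = x := by
  have hset : {η : GTrip G | η.1 = (unit x).1} = {η : GTrip G | η.1 = x} := rfl
  constructor
  · intro hx
    by_contra hno
    push_neg at hno
    apply hx
    show conv (starf n) n (unit x) = 0
    rw [conv_apply]
    apply finsum_mem_of_eqOn_zero
    intro η hη
    have h2 : n (gmul (ginv η) (unit x)) = 0 := by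
      by_contra h3
      exact (hno _ h3) rfl
    show starf n η * n (gmul (ginv η) (unit x)) = 0
    rw [h2, mul_zero]
  · rintro ⟨g, hg, hgx⟩
    show conv (starf n) n (unit x) ≠ 0
    rw [conv_apply]
    rw [finsum_mem_single _ (show ginv g ∈ {η : GTrip G | η.1 = (unit x).1} from hgx)]
    · have h1 : gmul (ginv (ginv g)) (unit x) = g := by
        rw [ginv_ginv]
        exact GTrip.eext rfl (add_zero _) hgx.symm
      rw [h1]
      show star (n (ginv (ginv g))) * n g ≠ 0
      rw [ginv_ginv]
      exact mul_ne_zero (star_eq_zero.not.mpr hg) hg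
    · intro b hb hne
      have h1 : n (ginv b) = 0 := by
        by_contra h2
        have h3 : (ginv b).2.2 = g.2.2 := by
          show b.1 = g.2.2
          rw [hgx]; exact hb
        have := hbis _ _ h2 hg h3
        exact hne (by rw [← this, ginv_ginv])
      show star (n (ginv b)) * _ = 0
      rw [h1, star_zero, zero_mul]

lemma ranSet_eq_domSet_starf (n : GTrip G → R) : ranSet n = domSet (starf n) := by
  ext y
  show conv n (starf n) (unit y) ≠ 0 ↔ conv (starf (starf n)) (starf n) (unit y) ≠ 0
  rw [starf_starf]

lemma alphaFun_eq' {n : GTrip G → R}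
    (hbis : ∀ g h, n g ≠ 0 → n h ≠ 0 → g.2.2 = h.2.2 → g = h)
    {g : GTrip G} {x : InfPath G} (hg : n g ≠ 0) (hx : g.2.2 = x) :
    alphaFun n x = g.1 := by
  unfold alphaFun
  rw [dif_pos ⟨g, hg, hx⟩]
  have hs := (⟨g, hg, hx⟩ : ∃ γ : GTrip G, n γ ≠ 0 ∧ γ.2.2 = x).choose_spec
  exact congrArg Prod.fst (hbis _ _ hs.1 hg (hs.2.trans hx.symm))

end StarRing

section Main
variable {R : Type} [CommRing R] [IsDomain R] [StarRing R]

lemma bis {n : GTrip G → R} (hn : IsNormalizer n) :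
    ∀ g h : GTrip G, n g ≠ 0 → n h ≠ 0 → g.2.2 = h.2.2 → g = h := by
  intro g h hg hh hsrc
  by_contra hne
  obtain ⟨m, c, p, q, hsrcpq, hrep⟩ := rep_of_mem hn.1
  set x := g.2.2 with hx
  set Φ : Set (GTrip G) := {γ | n γ ≠ 0 ∧ γ.2.2 = x} with hΦ
  have hgΦ : g ∈ Φ := ⟨hg, rfl⟩
  have hhΦ : h ∈ Φ := ⟨hh, hsrc.symm⟩
  have hΦfin : Φ.Finite := by
    apply Set.Finite.subset (Set.finite_range fun i : Fin m => Ga (p i) (q i) x)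
    rintro γ ⟨hγ1, hγ2⟩
    obtain ⟨i, _, hGa⟩ := nonzero_rep hrep hγ1
    exact ⟨i, by rw [← hγ2]; exact hGa.symm⟩
  -- extremal pair
  obtain ⟨g₀, h₀, hg₀, hh₀, hne₀, hbound⟩ :
      ∃ g₀ h₀ : GTrip G, g₀ ∈ Φ ∧ h₀ ∈ Φ ∧ g₀ ≠ h₀ ∧
        ∀ γ ∈ Φ, h₀.2.1 ≤ γ.2.1 ∧ γ.2.1 ≤ g₀.2.1 := by
    obtain ⟨gm, hgm, hmax⟩ := hΦfin.toFinset.exists_max_image (fun γ => γ.2.1)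
      ⟨g, by rw [Set.Finite.mem_toFinset]; exact hgΦ⟩
    obtain ⟨hm, hhm, hmin⟩ := hΦfin.toFinset.exists_min_image (fun γ => γ.2.1)
      ⟨g, by rw [Set.Finite.mem_toFinset]; exact hgΦ⟩
    rw [Set.Finite.mem_toFinset] at hgm hhm
    by_cases he : gm = hm
    · refine ⟨g, h, hgΦ, hhΦ, hne, fun γ hγ => ?_⟩
      have hD : hm.2.1 = gm.2.1 := by rw [he]
      have h1 := hmax γ (by rw [Set.Finite.mem_toFinset]; exact hγ)
      have h2 := hmin γ (by rw [Set.Finite.mem_toFinset]; exact hγ)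
      have h3 := hmax h (by rw [Set.Finite.mem_toFinset]; exact hhΦ)
      have h4 := hmin h (by rw [Set.Finite.mem_toFinset]; exact hhΦ)
      have h5 := hmax g (by rw [Set.Finite.mem_toFinset]; exact hgΦ)
      have h6 := hmin g (by rw [Set.Finite.mem_toFinset]; exact hgΦ)
      omega
    · refine ⟨gm, hm, hgm, hhm, he, fun γ hγ => ?_⟩
      exact ⟨hmin γ (by rw [Set.Finite.mem_toFinset]; exact hγ),
        hmax γ (by rw [Set.Finite.mem_toFinset]; exact hγ)⟩
  obtain ⟨N, hbnd⟩ : ∃ N : ℕ, ∀ i j : Fin m, (q i).len + (p j).len < N := by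
    refine ⟨((Finset.univ : Finset (Fin m)).sup fun i => (q i).len)
      + ((Finset.univ : Finset (Fin m)).sup fun i => (p i).len) + 1, fun i j => ?_⟩
    have h1 : (q i).len ≤ (Finset.univ : Finset (Fin m)).sup fun i => (q i).len :=
      Finset.le_sup (f := fun i => (q i).len) (Finset.mem_univ i)
    have h2 : (p j).len ≤ (Finset.univ : Finset (Fin m)).sup fun i => (p i).len :=
      Finset.le_sup (f := fun i => (p i).len) (Finset.mem_univ j)
    omega
  set d : GTrip G → R := Set.indicator (unitSet (Zset (pfx x N))) 1 with hd
  have hdD : d ∈ Diag R G := Submodule.subset_span ⟨pfx x N, rfl⟩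
  have hmD : conv (conv n d) (starf n) ∈ Diag R G := (hn.2 d hdD).1
  set γ₀ : GTrip G := (g₀.1, g₀.2.1 - h₀.2.1, h₀.1) with hγ₀
  have hzero : conv (conv n d) (starf n) γ₀ = 0 := by
    apply diag_eq_zero hmD
    intro w hw
    have h1 : g₀.1 = w := congrArg Prod.fst hw
    have h2 : g₀.2.1 - h₀.2.1 = 0 := congrArg (fun t => t.2.1) hw
    have h3 : h₀.1 = w := congrArg (fun t => t.2.2) hw
    exact hne₀ (GTrip.eext (h1.trans h3.symm) (by omega) (hg₀.2.trans hh₀.2.symm))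
  have hval : conv (conv n d) (starf n) γ₀ = n g₀ * star (n h₀) := by
    rw [conv_apply]
    rw [finsum_mem_single _ (show g₀ ∈ {η : GTrip G | η.1 = γ₀.1} from rfl)]
    · rw [hd, conv_d_apply]
      have hg₀x : g₀.2.2 ∈ Zset (pfx x N) := by rw [hg₀.2]; exact self_mem_Zset_pfx x N
      rw [if_pos hg₀x, mul_one]
      congr 1
      have h1 : ginv (gmul (ginv g₀) γ₀) = h₀ := by
        refine GTrip.eext rfl ?_ (hg₀.2.trans hh₀.2.symm)
        show -(-g₀.2.1 + (g₀.2.1 - h₀.2.1)) = h₀.2.1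
        omega
      show star (n (ginv (gmul (ginv g₀) γ₀))) = star (n h₀)
      rw [h1]
    · intro η hη hneη
      by_contra hterm
      have h1 : conv n d η ≠ 0 := fun h0 => hterm (by rw [h0, zero_mul])
      have h2 : starf n (gmul (ginv η) γ₀) ≠ 0 := fun h0 => hterm (by rw [h0, mul_zero])
      rw [hd, conv_d_apply] at h1
      have hnη : n η ≠ 0 := fun h0 => h1 (by rw [h0, zero_mul])
      have hcylmem : η.2.2 ∈ Zset (pfx x N) := by
        by_contra h0; exact h1 (by rw [if_neg h0, mul_zero])
      obtain ⟨hcyl, hrng⟩ := (mem_Zset_pfx).mp hcylmem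
      have h2' : n (ginv (gmul (ginv η) γ₀)) ≠ 0 := by
        intro h0
        apply h2
        show star (n (ginv (gmul (ginv η) γ₀))) = 0
        rw [h0, star_zero]
      set h'' := ginv (gmul (ginv η) γ₀) with hh''def
      have hh''2 : h''.2.2 = η.2.2 := rfl
      have hh''1 : h''.1 = h₀.1 := rfl
      have hh''k : h''.2.1 = η.2.1 - (g₀.2.1 - h₀.2.1) := by
        show -(-η.2.1 + (g₀.2.1 - h₀.2.1)) = _
        omega
      -- analyze η
      obtain ⟨i, hAi'', hηeq⟩ := nonzero_rep hrep hnη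
      obtain ⟨e, hAe'', hh''eq⟩ := nonzero_rep hrep h2'
      obtain ⟨j, hAj, hg₀eq⟩ := nonzero_rep hrep hg₀.1
      rw [hg₀.2] at hAj hg₀eq
      -- degree bounds
      have hGaiΦ : Ga (p i) (q i) x ∈ Φ := by
        refine ⟨?_, rfl⟩
        rw [← value_const hrep hbnd hcyl i hAi'', ← hηeq]
        exact hnη
      have hAe2 : Act (p e) (q e) η.2.2 := hAe''
      have hh''eq2 : h'' = Ga (p e) (q e) η.2.2 := hh''eq
      have hGaeΦ : Ga (p e) (q e) x ∈ Φ := by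
        refine ⟨?_, rfl⟩
        rw [← value_const hrep hbnd hcyl e hAe2, ← hh''eq2]
        exact h2'
      have hki : η.2.1 = ((p i).len : ℤ) - (q i).len := congrArg (fun t => t.2.1) hηeq
      have hke : h''.2.1 = ((p e).len : ℤ) - (q e).len := congrArg (fun t => t.2.1) hh''eq2
      have hbi := hbound _ hGaiΦ
      have hbe := hbound _ hGaeΦ
      rw [Ga_deg] at hbi hbe
      have hkg : η.2.1 = g₀.2.1 := by omega
      -- identify x'' = x
      have hkj : g₀.2.1 = ((p j).len : ℤ) - (q j).len := congrArg (fun t => t.2.1) hg₀eq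
      have hkn : (p i).len + (q j).len = (p j).len + (q i).len := by omega
      have h1eq : (Ga (p i) (q i) η.2.2).1 = (Ga (p j) (q j) x).1 := by
        rw [← hηeq, ← hg₀eq]
        exact hη
      have hxx : η.2.2 = x := source_eq hcyl (by have := hbnd i i; omega)
        (by have := hbnd j j; omega) hAi'' hAj hkn h1eq
      exact hneη (GTrip.eext hη (by omega) (hxx.trans hg₀.2.symm))
  rw [hval] at hzero
  rcases mul_eq_zero.mp hzero with h0 | h0
  · exact hg₀.1 h0
  · exact hh₀.1 (star_eq_zero.mp h0)

end Main

end LPA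

namespace LPA

variable {G : DirGraph}

lemma isOpen_Zset (μ : FinPath G) : IsOpen (Zset μ) :=
  TopologicalSpace.isOpen_generateFrom_of_mem ⟨μ, rfl⟩

lemma exists_pfx_subset {S : Set (InfPath G)} (hS : IsOpen S) :
    ∀ y ∈ S, ∃ M : ℕ, Zset (pfx y M) ⊆ S := by
  have hS' : TopologicalSpace.GenerateOpen {S | ∃ μ : FinPath G, S = Zset μ} S := hS
  clear hS
  induction hS' with
  | basic U hU =>
    obtain ⟨μ, rfl⟩ := hU
    intro y hy
    refine ⟨μ.len, fun x' hx' => ?_⟩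
    obtain ⟨h1, h2⟩ := hx'
    exact ⟨fun i hi => (h1 i hi).trans (hy.1 i hi), h2.trans hy.2⟩
  | univ => exact fun y _ => ⟨0, fun _ _ => trivial⟩
  | inter U V hU hV ihU ihV =>
    intro y hy
    obtain ⟨M₁, h₁⟩ := ihU y hy.1
    obtain ⟨M₂, h₂⟩ := ihV y hy.2
    refine ⟨max M₁ M₂, fun x' hx' => ?_⟩
    obtain ⟨he, hr⟩ := (mem_Zset_pfx).mp hx'
    exact ⟨h₁ ((mem_Zset_pfx).mpr ⟨fun i hi => he i (by omega), hr⟩),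
      h₂ ((mem_Zset_pfx).mpr ⟨fun i hi => he i (by omega), hr⟩)⟩
  | sUnion T hT ih =>
    intro y hy
    obtain ⟨U, hU, hyU⟩ := hy
    obtain ⟨M, hM⟩ := ih U hU y hyU
    exact ⟨M, fun x' hx' => ⟨U, hU, hM hx'⟩⟩

section Main2
variable {R : Type} [CommRing R] [IsDomain R] [StarRing R]

lemma alpha_continuousOn {n : GTrip G → R} (hn : IsNormalizer n) :
    ContinuousOn (alphaFun n) (domSet n) := by
  have hbis : ∀ g h : GTrip G, n g ≠ 0 → n h ≠ 0 → g.2.2 = h.2.2 → g = h := bis hn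
  obtain ⟨m, c, p, q, hsrcpq, hrep⟩ := rep_of_mem hn.1
  obtain ⟨N, hbnd⟩ : ∃ N : ℕ, ∀ i j : Fin m, (q i).len + (p j).len < N := by
    refine ⟨((Finset.univ : Finset (Fin m)).sup fun i => (q i).len)
      + ((Finset.univ : Finset (Fin m)).sup fun i => (p i).len) + 1, fun i j => ?_⟩
    have h1 : (q i).len ≤ (Finset.univ : Finset (Fin m)).sup fun i => (q i).len :=
      Finset.le_sup (f := fun i => (q i).len) (Finset.mem_univ i)
    have h2 : (p j).len ≤ (Finset.univ : Finset (Fin m)).sup fun i => (p i).len :=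
      Finset.le_sup (f := fun i => (p i).len) (Finset.mem_univ j)
    omega
  intro x hx
  obtain ⟨g, hg, hgx⟩ := (domSet_iff hbis x).mp hx
  obtain ⟨j, hAj, hgeq⟩ := nonzero_rep hrep hg
  rw [hgx] at hAj hgeq
  rw [ContinuousWithinAt, alphaFun_eq' hbis hg hgx, tendsto_nhds]
  intro S hSopen hgS
  obtain ⟨M, hM⟩ := exists_pfx_subset hSopen g.1 hgS
  have key : ∀ x' ∈ Zset (pfx x (N + M)), alphaFun n x' ∈ S := by
    intro x' hx'
    obtain ⟨hcyl, hrng⟩ := (mem_Zset_pfx).mp hx'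
    have hcylN : ∀ t < N, x'.edges t = x.edges t := fun t ht => hcyl t (by omega)
    have hAj' : Act (p j) (q j) x' :=
      (Act_cyl hcylN (by have := hbnd j j; omega)).mpr hAj
    have hval : n (Ga (p j) (q j) x') ≠ 0 := by
      rw [value_const hrep hbnd hcylN j hAj', ← hgeq]
      exact hg
    have halpha : alphaFun n x' = (Ga (p j) (q j) x').1 :=
      alphaFun_eq' hbis hval rfl
    rw [halpha]
    apply hM
    have hedges : ∀ t < M, (Ga (p j) (q j) x').1.edges t = g.1.edges t := by
      intro t ht
      have hgc : g.1 = (Ga (p j) (q j) x).1 := congrArg Prod.fst hgeq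
      rw [hgc, Ga_fst_edges hAj' t, Ga_fst_edges hAj t]
      by_cases hc : t < (p j).len
      · rw [if_pos hc, if_pos hc]
      · rw [if_neg hc, if_neg hc]
        apply hcyl
        have := hbnd j j
        omega
    refine ⟨hedges, ?_⟩
    show G.r _ = G.r _
    have h0 : (Ga (p j) (q j) x').1.edges 0 = g.1.edges 0 := by
      have hgc : g.1 = (Ga (p j) (q j) x).1 := congrArg Prod.fst hgeq
      rw [hgc, Ga_fst_edges hAj' 0, Ga_fst_edges hAj 0]
      by_cases hc : 0 < (p j).len
      · rw [if_pos hc, if_pos hc]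
      · rw [if_neg hc, if_neg hc]
        apply hcyl
        have := hbnd j j
        omega
    rw [h0]
  have hmem : Zset (pfx x (N + M)) ∈ nhdsWithin x (domSet n) :=
    mem_nhdsWithin_of_mem_nhds ((isOpen_Zset _).mem_nhds (self_mem_Zset_pfx x (N + M)))
  exact Filter.mem_of_superset hmem key

end Main2

end LPA

open LPA in
/-- `α_n` is a homeomorphism of `dom(n)` onto `ran(n) = dom(n^*)` with inverse `α_{n^*}`. -/
theorem alpha_homeo {G : DirGraph} (hrf : RowFinite G) (hns : NoSources G)
    {R : Type} [CommRing R] [IsDomain R] [StarRing R]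
    (n : GTrip G → R) (hn : IsNormalizer n) :
    Set.BijOn (alphaFun n) (domSet n) (ranSet n) ∧
      ranSet n = domSet (starf n) ∧
      ContinuousOn (alphaFun n) (domSet n) ∧
      ContinuousOn (alphaFun (starf n)) (ranSet n) ∧
      (∀ x ∈ domSet n, alphaFun (starf n) (alphaFun n x) = x) ∧
      (∀ y ∈ ranSet n, alphaFun n (alphaFun (starf n) y) = y) := by
  have hbisn : ∀ g h : GTrip G, n g ≠ 0 → n h ≠ 0 → g.2.2 = h.2.2 → g = h := bis hn
  have hnstar := isNormalizer_starf hn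
  have hbiss : ∀ g h : GTrip G, starf n g ≠ 0 → starf n h ≠ 0 → g.2.2 = h.2.2 → g = h :=
    bis hnstar
  have hrd : ranSet n = domSet (starf n) := ranSet_eq_domSet_starf n
  have hdom : ∀ x, x ∈ domSet n ↔ ∃ g, n g ≠ 0 ∧ g.2.2 = x := domSet_iff hbisn
  have hran : ∀ y, y ∈ ranSet n ↔ ∃ g, n g ≠ 0 ∧ g.1 = y := by
    intro y
    rw [show (y ∈ ranSet n) ↔ y ∈ domSet (starf n) from by rw [hrd]]
    rw [domSet_iff hbiss]
    constructor
    · rintro ⟨g', hg', hy⟩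
      exact ⟨ginv g', starf_apply_ne.mp hg', hy⟩
    · rintro ⟨g, hg, hy⟩
      refine ⟨ginv g, ?_, hy⟩
      rw [starf_apply_ne, ginv_ginv]
      exact hg
  refine ⟨⟨?_, ?_, ?_⟩, hrd, alpha_continuousOn hn, ?_, ?_, ?_⟩
  · -- MapsTo
    intro x hx
    obtain ⟨g, hg, hgx⟩ := (hdom x).mp hx
    rw [alphaFun_eq' hbisn hg hgx]
    exact (hran g.1).mpr ⟨g, hg, rfl⟩
  · -- InjOn
    intro x₁ hx₁ x₂ hx₂ heq
    obtain ⟨g₁, hg₁, hg₁x⟩ := (hdom x₁).mp hx₁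
    obtain ⟨g₂, hg₂, hg₂x⟩ := (hdom x₂).mp hx₂
    rw [alphaFun_eq' hbisn hg₁ hg₁x, alphaFun_eq' hbisn hg₂ hg₂x] at heq
    have h1 : starf n (ginv g₁) ≠ 0 := by rw [starf_apply_ne, ginv_ginv]; exact hg₁
    have h2 : starf n (ginv g₂) ≠ 0 := by rw [starf_apply_ne, ginv_ginv]; exact hg₂
    have h3 : (ginv g₁).2.2 = (ginv g₂).2.2 := heq
    have h4 := hbiss _ _ h1 h2 h3
    have h5 : g₁ = g₂ := by rw [← ginv_ginv g₁, h4, ginv_ginv]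
    rw [← hg₁x, ← hg₂x, h5]
  · -- SurjOn
    intro y hy
    obtain ⟨g, hg, hgy⟩ := (hran y).mp hy
    exact ⟨g.2.2, (hdom g.2.2).mpr ⟨g, hg, rfl⟩, by rw [alphaFun_eq' hbisn hg rfl]; exact hgy⟩
  · -- continuity of α_{n*} on ran
    rw [hrd]
    exact alpha_continuousOn hnstar
  · -- left inverse
    intro x hx
    obtain ⟨g, hg, hgx⟩ := (hdom x).mp hx
    rw [alphaFun_eq' hbisn hg hgx]
    have h1 : starf n (ginv g) ≠ 0 := by rw [starf_apply_ne, ginv_ginv]; exact hg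
    have h2 : (ginv g).2.2 = g.1 := rfl
    rw [alphaFun_eq' hbiss h1 h2]
    exact hgx
  · -- right inverse
    intro y hy
    obtain ⟨g, hg, hgy⟩ := (hran y).mp hy
    have h1 : starf n (ginv g) ≠ 0 := by rw [starf_apply_ne, ginv_ginv]; exact hg
    have h2 : (ginv g).2.2 = y := hgy
    rw [alphaFun_eq' hbiss h1 h2]
    have h3 : (ginv g).1 = g.2.2 := rfl
    rw [h3, alphaFun_eq' hbisn hg rfl]
    exact hgy
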